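/- Let E be a real Banach space and let U, V, W be invertible linear isometries of E satisfying the Heisenberg relations. Let d ∈ ℕ and let A, B ⊆ {0, …, d−1} be nonempty finite sets with (max A)·(max B) ≤ d − 2. Then the bounded operators satisfy ‖ ( (∏_{a ∈ A} X_a)(∏_{b ∈ B} Y_b) − (∏_{b ∈ B} Y_b)(∏_{a ∈ A} X_a) ) ∘ Z^d ‖ ≤ 8·(1/2)^{d − max A − max B} (the X_a commute with one another and the Y_b commute with one another, so the products are well-defined). In particular, for d₁, d₂, d₃ ∈ ℕ with d₁ + d₂ ≤ d₃ − 2 one has ‖ (X^{d₁} Y^{d₂} − Y^{d₂} X^{d₁}) ∘ Z^{d₃} ‖ ≤ 8·(1/2)^{d₃ − (d₁ + d₂)}. -/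

import Mathlib

set_option synthInstance.maxHeartbeats 1000000
set_option maxHeartbeats 1000000


/-- `U, V, W` satisfy the Heisenberg relations `W = U⁻¹V⁻¹UV`, `UW = WU`, `VW = WV`
(the multiplication on `E ≃ₗᵢ[ℝ] E` is composition, `(e₁ * e₂) x = e₁ (e₂ x)`). -/
def HeisenbergRel {E : Type*} [NormedAddCommGroup E] [NormedSpace ℝ E]
    (U V W : E ≃ₗᵢ[ℝ] E) : Prop :=
  W = U⁻¹ * V⁻¹ * U * V ∧ U * W = W * U ∧ V * W = W * V

/-- The bounded operator on `E` underlying an invertible linear isometry. -/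
noncomputable def isomCLM {E : Type*} [NormedAddCommGroup E] [NormedSpace ℝ E]
    (U : E ≃ₗᵢ[ℝ] E) : E →L[ℝ] E :=
  U.toLinearIsometry.toContinuousLinearMap

/-- The averaging operator `2^{-d} ∑_{a=0}^{2^d - 1} U^a`. -/
noncomputable def avgOp {E : Type*} [NormedAddCommGroup E] [NormedSpace ℝ E]
    (U : E ≃ₗᵢ[ℝ] E) (d : ℕ) : E →L[ℝ] E :=
  ((2 : ℝ) ^ d)⁻¹ • ∑ a ∈ Finset.range (2 ^ d), isomCLM (U ^ a)

/-- The operator `(I + U^{2^k})/2`. -/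
noncomputable def halfOp {E : Type*} [NormedAddCommGroup E] [NormedSpace ℝ E]
    (U : E ≃ₗᵢ[ℝ] E) (k : ℕ) : E →L[ℝ] E :=
  (2⁻¹ : ℝ) • (1 + isomCLM (U ^ 2 ^ k))

/-- The product `∏_{a ∈ A} f a` of pairwise commuting operators, taken in increasing order
of the indices. -/
noncomputable def finsetProdOp {E : Type*} [NormedAddCommGroup E] [NormedSpace ℝ E]
    (f : ℕ → E →L[ℝ] E) (A : Finset ℕ) : E →L[ℝ] E :=
  ((A.sort (· ≤ ·)).map f).prod

section A
variable {E : Type*} [NormedAddCommGroup E] [NormedSpace ℝ E]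

lemma hco_isomCLM_mul (U V : E ≃ₗᵢ[ℝ] E) : isomCLM (U * V) = isomCLM U * isomCLM V := rfl
lemma hco_isomCLM_one : isomCLM (1 : E ≃ₗᵢ[ℝ] E) = 1 := rfl
lemma hco_isomCLM_pow (U : E ≃ₗᵢ[ℝ] E) (n : ℕ) : isomCLM (U ^ n) = isomCLM U ^ n := by
  induction n with
  | zero => rw [pow_zero, pow_zero, hco_isomCLM_one]
  | succ n ih => rw [pow_succ, pow_succ, hco_isomCLM_mul, ih]
lemma hco_norm_le (U : E ≃ₗᵢ[ℝ] E) : ‖isomCLM U‖ ≤ 1 :=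
  U.toLinearIsometry.norm_toContinuousLinearMap_le
lemma hco_norm_one_le : ‖(1 : E →L[ℝ] E)‖ ≤ 1 := by
  rw [ContinuousLinearMap.one_def]; exact ContinuousLinearMap.norm_id_le

lemma hco_commute_avg {U W : E ≃ₗᵢ[ℝ] E} (h : Commute U W) (j d : ℕ) :
    isomCLM (U ^ j) * avgOp W d = avgOp W d * isomCLM (U ^ j) := by
  unfold avgOp
  rw [mul_smul_comm, smul_mul_assoc, Finset.mul_sum, Finset.sum_mul]
  congr 1
  refine Finset.sum_congr rfl fun c _ => ?_
  rw [← hco_isomCLM_mul, ← hco_isomCLM_mul, (h.pow_pow j c).eq]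

lemma hco_half_commute_avg {U W : E ≃ₗᵢ[ℝ] E} (h : Commute U W) (k d : ℕ) :
    halfOp U k * avgOp W d = avgOp W d * halfOp U k := by
  unfold halfOp
  rw [smul_mul_assoc, mul_smul_comm, add_mul, mul_add, one_mul, mul_one,
    hco_commute_avg h]

lemma hco_half_norm (U : E ≃ₗᵢ[ℝ] E) (k : ℕ) : ‖halfOp U k‖ ≤ 1 := by
  unfold halfOp
  rw [norm_smul (α := ℝ) (β := E →L[ℝ] E)]
  have h1 : ‖(1 : E →L[ℝ] E) + isomCLM (U ^ 2 ^ k)‖ ≤ 2 := by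
    refine le_trans (norm_add_le _ _) ?_
    have := hco_norm_le (U ^ 2 ^ k)
    have := hco_norm_one_le (E := E)
    linarith
  have h2 : ‖(2⁻¹ : ℝ)‖ = 2⁻¹ := by rw [Real.norm_eq_abs]; norm_num
  rw [h2]
  nlinarith [norm_nonneg ((1 : E →L[ℝ] E) + isomCLM (U ^ 2 ^ k))]

lemma hco_shift (W : E ≃ₗᵢ[ℝ] E) (d : ℕ) :
    (isomCLM W - 1) * avgOp W d = ((2 : ℝ) ^ d)⁻¹ • (isomCLM W ^ 2 ^ d - 1) := by
  unfold avgOp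
  rw [mul_smul_comm]
  congr 1
  have hc : (isomCLM W - 1) * ∑ a ∈ Finset.range (2 ^ d), isomCLM (W ^ a)
      = (∑ a ∈ Finset.range (2 ^ d), isomCLM W ^ a) * (isomCLM W - 1) := by
    simp only [hco_isomCLM_pow]
    refine (Commute.sum_right _ _ _ fun a _ => ?_).eq
    exact (((Commute.refl (isomCLM W)).pow_right a).sub_left
      (Commute.one_left _))
  rw [hc, geom_sum_mul]

lemma hco_pow_shift_norm (W : E ≃ₗᵢ[ℝ] E) (d m : ℕ) :
    ‖(isomCLM (W ^ m) - 1) * avgOp W d‖ ≤ 2 * m * ((2 : ℝ) ^ d)⁻¹ := by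
  have h1 : isomCLM (W ^ m) - 1
      = (∑ i ∈ Finset.range m, isomCLM W ^ i) * (isomCLM W - 1) := by
    rw [geom_sum_mul, hco_isomCLM_pow]
  rw [h1, mul_assoc, hco_shift]
  have hS : ‖∑ i ∈ Finset.range m, isomCLM W ^ i‖ ≤ (m : ℝ) := by
    refine le_trans (norm_sum_le _ _) ?_
    calc ∑ i ∈ Finset.range m, ‖isomCLM W ^ i‖ ≤ ∑ _i ∈ Finset.range m, (1 : ℝ) := by
          refine Finset.sum_le_sum fun i _ => ?_
          rw [← hco_isomCLM_pow]
          exact hco_norm_le _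
      _ = (m : ℝ) := by simp
  have hT : ‖((2 : ℝ) ^ d)⁻¹ • (isomCLM W ^ 2 ^ d - 1)‖ ≤ ((2 : ℝ) ^ d)⁻¹ * 2 := by
    rw [norm_smul (α := ℝ) (β := E →L[ℝ] E), Real.norm_eq_abs, abs_of_nonneg (by positivity)]
    refine mul_le_mul_of_nonneg_left ?_ (by positivity)
    refine le_trans (norm_sub_le _ _) ?_
    have h2 : ‖isomCLM W ^ 2 ^ d‖ ≤ 1 := by
      rw [← hco_isomCLM_pow]; exact hco_norm_le _
    have := hco_norm_one_le (E := E)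
    linarith
  calc ‖(∑ i ∈ Finset.range m, isomCLM W ^ i) *
        (((2 : ℝ) ^ d)⁻¹ • (isomCLM W ^ 2 ^ d - 1))‖
      ≤ (m : ℝ) * (((2 : ℝ) ^ d)⁻¹ * 2) := by
        refine le_trans (norm_mul_le _ _) ?_
        exact mul_le_mul hS hT (norm_nonneg _) (Nat.cast_nonneg m)
    _ = 2 * m * ((2 : ℝ) ^ d)⁻¹ := by ring

end A

lemma hco_heis_pow {G : Type*} [Group G] {U V W : G}
    (h : U * V = V * U * W) (hUW : Commute U W) (hVW : Commute V W) (m n : ℕ) :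
    U ^ m * V ^ n = V ^ n * U ^ m * W ^ (m * n) := by
  have key : ∀ k : ℕ, U * V ^ k = V ^ k * U * W ^ k := by
    intro k
    induction k with
    | zero => simp
    | succ k ih =>
      calc U * V ^ (k + 1) = (U * V ^ k) * V := by rw [pow_succ, mul_assoc]
        _ = V ^ k * U * (W ^ k * V) := by rw [ih, mul_assoc]
        _ = V ^ k * U * (V * W ^ k) := by rw [((hVW.symm).pow_left k).eq]
        _ = V ^ k * (U * V) * W ^ k := by rw [mul_assoc, ← mul_assoc U V, ← mul_assoc]
        _ = V ^ k * (V * U * W) * W ^ k := by rw [h]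
        _ = V ^ (k + 1) * U * W ^ (k + 1) := by
            rw [pow_succ, pow_succ']
            simp only [mul_assoc]
  induction m with
  | zero => simp
  | succ m ih =>
    calc U ^ (m + 1) * V ^ n = U * (U ^ m * V ^ n) := by rw [pow_succ', mul_assoc]
      _ = U * (V ^ n * U ^ m * W ^ (m * n)) := by rw [ih]
      _ = (U * V ^ n) * (U ^ m * W ^ (m * n)) := by simp only [mul_assoc]
      _ = V ^ n * U * (W ^ n * U ^ m) * W ^ (m * n) := by rw [key n]; simp only [mul_assoc]
      _ = V ^ n * U * (U ^ m * W ^ n) * W ^ (m * n) := by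
          rw [((hUW.pow_pow m n).symm).eq]
      _ = V ^ n * U ^ (m + 1) * (W ^ n * W ^ (m * n)) := by
          rw [pow_succ']
          simp only [mul_assoc]
      _ = V ^ n * U ^ (m + 1) * W ^ ((m + 1) * n) := by
          rw [← pow_add]
          congr 2
          ring

section B
variable {E : Type*} [NormedAddCommGroup E] [NormedSpace ℝ E]

lemma hco_pair (U V W : E ≃ₗᵢ[ℝ] E)
    (h : U * V = V * U * W) (hUW : Commute U W) (hVW : Commute V W) (a b d : ℕ) :
    ‖(halfOp U a * halfOp V b - halfOp V b * halfOp U a) * avgOp W d‖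
      ≤ (2 : ℝ) ^ a * ((2 : ℝ) ^ b * (((2 : ℝ) ^ d)⁻¹ * 2⁻¹)) := by
  set J := isomCLM (U ^ 2 ^ a) with hJ
  set K := isomCLM (V ^ 2 ^ b) with hK
  set P := isomCLM (W ^ (2 ^ a * 2 ^ b)) with hP
  have hJK : J * K = K * (J * P) := by
    rw [hJ, hK, hP, ← hco_isomCLM_mul, ← hco_isomCLM_mul, ← hco_isomCLM_mul,
      hco_heis_pow h hUW hVW]
    rw [mul_assoc]
  have key : (halfOp U a * halfOp V b - halfOp V b * halfOp U a) * avgOp W d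
      = (4⁻¹ : ℝ) • (K * (J * ((P - 1) * avgOp W d))) := by
    have e1 : halfOp U a * halfOp V b - halfOp V b * halfOp U a
        = (4⁻¹ : ℝ) • (J * K - K * J) := by
      unfold halfOp
      rw [smul_mul_smul_comm, smul_mul_smul_comm, ← smul_sub]
      norm_num
      rw [hJ, hK]
      noncomm_ring
    rw [e1, smul_mul_assoc]
    congr 1
    rw [hJK]
    noncomm_ring
  rw [key, norm_smul (α := ℝ) (β := E →L[ℝ] E), Real.norm_eq_abs,
    abs_of_nonneg (by norm_num : (0:ℝ) ≤ 4⁻¹)]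
  have hKn : ‖K‖ ≤ 1 := hco_norm_le _
  have hJn : ‖J‖ ≤ 1 := hco_norm_le _
  have hPZ : ‖(P - 1) * avgOp W d‖ ≤ 2 * (2 ^ a * 2 ^ b : ℕ) * ((2 : ℝ) ^ d)⁻¹ :=
    hco_pow_shift_norm W d _
  have step : ‖K * (J * ((P - 1) * avgOp W d))‖ ≤ ‖(P - 1) * avgOp W d‖ := by
    refine le_trans (norm_mul_le _ _) ?_
    refine le_trans (mul_le_of_le_one_left (norm_nonneg _) hKn) ?_
    exact le_trans (norm_mul_le _ _) (mul_le_of_le_one_left (norm_nonneg _) hJn)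
  refine le_trans (mul_le_mul_of_nonneg_left (le_trans step hPZ) (by norm_num)) ?_
  apply le_of_eq
  push_cast
  ring

lemma hco_prod_norm_le (L : List (E →L[ℝ] E)) (h : ∀ p ∈ L, ‖p‖ ≤ 1) :
    ‖L.prod‖ ≤ 1 := by
  induction L with
  | nil => rw [List.prod_nil]; exact hco_norm_one_le
  | cons x L ih =>
    rw [List.prod_cons]
    calc ‖x * L.prod‖ ≤ ‖x‖ * ‖L.prod‖ := norm_mul_le _ _
      _ ≤ 1 * 1 :=
        mul_le_mul (h x (by simp)) (ih fun p hp => h p (by simp [hp]))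
          (norm_nonneg _) zero_le_one
      _ = 1 := mul_one 1

lemma hco_prod_commute (Z : E →L[ℝ] E) (L : List (E →L[ℝ] E))
    (h : ∀ p ∈ L, p * Z = Z * p) : L.prod * Z = Z * L.prod := by
  induction L with
  | nil => rw [List.prod_nil, one_mul, mul_one]
  | cons x L ih =>
    rw [List.prod_cons, mul_assoc, ih fun p hp => h p (by simp [hp]),
      ← mul_assoc, h x (by simp), mul_assoc]

lemma hco_single_list (X Z : E →L[ℝ] E) (g : ℕ → E →L[ℝ] E) (ε : ℕ → ℝ)
    (hg : ∀ b, ‖g b‖ ≤ 1) (hgZ : ∀ b, g b * Z = Z * g b)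
    (hpair : ∀ b, ‖(X * g b - g b * X) * Z‖ ≤ ε b) (L : List ℕ) :
    ‖(X * (L.map g).prod - (L.map g).prod * X) * Z‖ ≤ (L.map ε).sum := by
  induction L with
  | nil => simp
  | cons b L ih =>
    have hQn : ‖(L.map g).prod‖ ≤ 1 := by
      refine hco_prod_norm_le _ ?_
      intro p hp
      obtain ⟨b', _, rfl⟩ := List.mem_map.1 hp
      exact hg b'
    have hQZ : (L.map g).prod * Z = Z * (L.map g).prod := by
      refine hco_prod_commute _ _ ?_
      intro p hp
      obtain ⟨b', _, rfl⟩ := List.mem_map.1 hp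
      exact hgZ b'
    have decomp : (X * ((b :: L).map g).prod - ((b :: L).map g).prod * X) * Z
        = g b * ((X * (L.map g).prod - (L.map g).prod * X) * Z)
          + ((X * g b - g b * X) * Z) * (L.map g).prod := by
      simp only [List.map_cons, List.prod_cons]
      have base : X * (g b * (L.map g).prod) - g b * (L.map g).prod * X
          = g b * (X * (L.map g).prod - (L.map g).prod * X)
            + (X * g b - g b * X) * (L.map g).prod := by noncomm_ring
      rw [base, add_mul, mul_assoc (g b), mul_assoc (X * g b - g b * X),
        hQZ, ← mul_assoc (X * g b - g b * X), mul_assoc (X * g b - g b * X) Z]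
    rw [decomp, List.map_cons, List.sum_cons]
    refine le_trans (norm_add_le _ _) ?_
    have t1 : ‖g b * ((X * (L.map g).prod - (L.map g).prod * X) * Z)‖ ≤ (L.map ε).sum :=
      le_trans (le_trans (norm_mul_le _ _)
        (mul_le_of_le_one_left (norm_nonneg _) (hg b))) ih
    have t2 : ‖((X * g b - g b * X) * Z) * (L.map g).prod‖ ≤ ε b :=
      le_trans (le_trans (norm_mul_le _ _)
        (mul_le_of_le_one_right (norm_nonneg _) hQn)) (hpair b)
    linarith

lemma hco_list_list (Z : E →L[ℝ] E) (f g : ℕ → E →L[ℝ] E) (ε : ℕ → ℕ → ℝ)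
    (hf : ∀ a, ‖f a‖ ≤ 1) (hg : ∀ b, ‖g b‖ ≤ 1)
    (hfZ : ∀ a, f a * Z = Z * f a) (hgZ : ∀ b, g b * Z = Z * g b)
    (hpair : ∀ a b, ‖(f a * g b - g b * f a) * Z‖ ≤ ε a b) (LA LB : List ℕ) :
    ‖((LA.map f).prod * (LB.map g).prod - (LB.map g).prod * (LA.map f).prod) * Z‖
      ≤ (LA.map fun a => (LB.map (ε a)).sum).sum := by
  induction LA with
  | nil => simp
  | cons a LA ih =>
    set Q := (LB.map g).prod with hQ
    set P' := (LA.map f).prod with hP'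
    have hPn : ‖P'‖ ≤ 1 := by
      refine hco_prod_norm_le _ ?_
      intro p hp
      obtain ⟨a', _, rfl⟩ := List.mem_map.1 hp
      exact hf a'
    have hPZ : P' * Z = Z * P' := by
      refine hco_prod_commute _ _ ?_
      intro p hp
      obtain ⟨a', _, rfl⟩ := List.mem_map.1 hp
      exact hfZ a'
    have decomp : (((a :: LA).map f).prod * Q - Q * ((a :: LA).map f).prod) * Z
        = f a * ((P' * Q - Q * P') * Z) + ((f a * Q - Q * f a) * Z) * P' := by
      simp only [List.map_cons, List.prod_cons, ← hP']
      have base : f a * P' * Q - Q * (f a * P')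
          = f a * (P' * Q - Q * P') + (f a * Q - Q * f a) * P' := by noncomm_ring
      rw [base, add_mul, mul_assoc (f a), mul_assoc (f a * Q - Q * f a),
        hPZ, ← mul_assoc (f a * Q - Q * f a), mul_assoc (f a * Q - Q * f a) Z]
    rw [decomp, List.map_cons, List.sum_cons]
    refine le_trans (norm_add_le _ _) ?_
    have t1 : ‖f a * ((P' * Q - Q * P') * Z)‖ ≤ (LA.map fun a => (LB.map (ε a)).sum).sum :=
      le_trans (le_trans (norm_mul_le _ _)
        (mul_le_of_le_one_left (norm_nonneg _) (hf a))) ih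
    have t2 : ‖((f a * Q - Q * f a) * Z) * P'‖ ≤ (LB.map (ε a)).sum := by
      refine le_trans (le_trans (norm_mul_le _ _)
        (mul_le_of_le_one_right (norm_nonneg _) hPn)) ?_
      exact hco_single_list (f a) Z g (ε a) hg hgZ (hpair a) LB
    linarith

lemma hco_sum_sort (A : Finset ℕ) (h : ℕ → ℝ) :
    ((A.sort (· ≤ ·)).map h).sum = ∑ a ∈ A, h a := by
  rw [List.Perm.sum_eq (List.Perm.map h (Finset.sort_perm_toList (s := A) (r := (· ≤ ·))))]
  rw [Finset.sum_eq_multiset_sum]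
  rw [← Multiset.sum_coe, ← Multiset.map_coe, Finset.coe_toList]

lemma hco_pow_sum_le (A : Finset ℕ) (n : ℕ) (h : ∀ a ∈ A, a < n) :
    ∑ a ∈ A, (2 : ℝ) ^ a ≤ 2 ^ n := by
  calc ∑ a ∈ A, (2 : ℝ) ^ a ≤ ∑ a ∈ Finset.range n, (2 : ℝ) ^ a :=
      Finset.sum_le_sum_of_subset_of_nonneg
        (fun a ha => Finset.mem_range.2 (h a ha)) (fun i _ _ => by positivity)
    _ ≤ 2 ^ n := by
      rw [geom_sum_eq (by norm_num : (2:ℝ) ≠ 1)]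
      norm_num

lemma hco_zpow_core (s t d : ℕ) (e : ℤ) (he : (s : ℤ) + t - d - 1 ≤ 3 - e) :
    (2 : ℝ) ^ s * ((2 : ℝ) ^ t * (((2 : ℝ) ^ d)⁻¹ * 2⁻¹)) ≤ 8 * (2⁻¹ : ℝ) ^ e := by
  have h2 : (2 : ℝ) ≠ 0 := two_ne_zero
  have hL : (2 : ℝ) ^ s * ((2 : ℝ) ^ t * (((2 : ℝ) ^ d)⁻¹ * 2⁻¹))
      = (2 : ℝ) ^ ((s : ℤ) + t - d - 1) := by
    rw [← zpow_natCast (2:ℝ) s, ← zpow_natCast (2:ℝ) t, ← zpow_natCast (2:ℝ) d,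
      ← zpow_neg, show ((2:ℝ))⁻¹ = (2:ℝ) ^ (-1 : ℤ) by norm_num,
      ← zpow_add₀ h2, ← zpow_add₀ h2, ← zpow_add₀ h2]
    congr 1
    ring
  have hR : 8 * (2⁻¹ : ℝ) ^ e = (2 : ℝ) ^ ((3 : ℤ) - e) := by
    rw [inv_zpow, ← zpow_neg, show (8:ℝ) = (2:ℝ) ^ (3 : ℤ) by norm_num, ← zpow_add₀ h2]
    congr 1
  rw [hL, hR]
  exact zpow_le_zpow_right₀ one_le_two he

lemma hco_avg_eq_prod (U : E ≃ₗᵢ[ℝ] E) (n : ℕ) :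
    avgOp U n = ((List.range n).map (halfOp U)).prod := by
  induction n with
  | zero =>
    unfold avgOp
    simp [hco_isomCLM_one]
  | succ n ih =>
    rw [List.range_succ, List.map_append, List.prod_append, List.map_singleton,
      List.prod_singleton, ← ih]
    unfold avgOp halfOp
    rw [mul_smul_comm, smul_mul_assoc, smul_smul, mul_add, mul_one]
    have hsplit : ∑ a ∈ Finset.range (2 ^ (n + 1)), isomCLM (U ^ a)
        = (∑ a ∈ Finset.range (2 ^ n), isomCLM (U ^ a))
          + ∑ a ∈ Finset.range (2 ^ n), isomCLM (U ^ (2 ^ n + a)) := by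
      rw [show 2 ^ (n + 1) = 2 ^ n + 2 ^ n by ring, Finset.sum_range_add]
    have hmul : (∑ a ∈ Finset.range (2 ^ n), isomCLM (U ^ a)) * isomCLM (U ^ 2 ^ n)
        = ∑ a ∈ Finset.range (2 ^ n), isomCLM (U ^ (2 ^ n + a)) := by
      rw [Finset.sum_mul]
      refine Finset.sum_congr rfl fun a _ => ?_
      rw [← hco_isomCLM_mul, ← pow_add, add_comm]
    rw [hsplit, hmul]
    congr 1
    rw [pow_succ]
    field_simp

end B


/-- Norm bound for the commutator of products of the `X_a` and the `Y_b` against `Z^d`: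
`‖((∏_{a ∈ A} X_a)(∏_{b ∈ B} Y_b) - (∏_{b ∈ B} Y_b)(∏_{a ∈ A} X_a)) Z^d‖ ≤
8 (1/2)^{d - max A - max B}`; in particular, for `d₁ + d₂ ≤ d₃ - 2`,
`‖(X^{d₁} Y^{d₂} - Y^{d₂} X^{d₁}) Z^{d₃}‖ ≤ 8 (1/2)^{d₃ - (d₁ + d₂)}`. -/
theorem heisenberg_change_of_order
    (E : Type*) [NormedAddCommGroup E] [NormedSpace ℝ E] [CompleteSpace E]
    (U V W : E ≃ₗᵢ[ℝ] E) (hrel : HeisenbergRel U V W)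
    (d : ℕ) (A B : Finset ℕ) (hA : A.Nonempty) (hB : B.Nonempty)
    (hAd : ∀ a ∈ A, a < d) (hBd : ∀ b ∈ B, b < d)
    (hmax : (A.max' hA : ℤ) * (B.max' hB : ℤ) ≤ (d : ℤ) - 2) :
    ‖(finsetProdOp (halfOp U) A * finsetProdOp (halfOp V) B -
          finsetProdOp (halfOp V) B * finsetProdOp (halfOp U) A) * avgOp W d‖ ≤
        8 * (2⁻¹ : ℝ) ^ ((d : ℤ) - (A.max' hA : ℤ) - (B.max' hB : ℤ)) ∧
      ∀ d₁ d₂ d₃ : ℕ, (d₁ : ℤ) + (d₂ : ℤ) ≤ (d₃ : ℤ) - 2 →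
        ‖(avgOp U d₁ * avgOp V d₂ - avgOp V d₂ * avgOp U d₁) * avgOp W d₃‖ ≤
          8 * (2⁻¹ : ℝ) ^ ((d₃ : ℤ) - ((d₁ : ℤ) + (d₂ : ℤ))) := by
  obtain ⟨hWrel, hUWe, hVWe⟩ := hrel
  have hUW : Commute U W := hUWe
  have hVW : Commute V W := hVWe
  have h : U * V = V * U * W := by rw [hWrel]; group
  have core : ∀ (d' : ℕ) (LA LB : List ℕ),
      ‖((LA.map (halfOp U)).prod * (LB.map (halfOp V)).prod
          - (LB.map (halfOp V)).prod * (LA.map (halfOp U)).prod) * avgOp W d'‖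
        ≤ (LA.map fun a => (LB.map fun b =>
            (2:ℝ)^a * ((2:ℝ)^b * (((2:ℝ)^d')⁻¹ * 2⁻¹))).sum).sum := by
    intro d' LA LB
    exact hco_list_list (avgOp W d') (halfOp U) (halfOp V) _
      (fun a => hco_half_norm U a) (fun b => hco_half_norm V b)
      (fun a => hco_half_commute_avg hUW a d') (fun b => hco_half_commute_avg hVW b d')
      (fun a b => hco_pair U V W h hUW hVW a b d') LA LB
  have sumeval : ∀ (d' : ℕ) (S T : Finset ℕ),
      (∑ a ∈ S, ∑ b ∈ T, ((2:ℝ)^a * ((2:ℝ)^b * (((2:ℝ)^d')⁻¹ * 2⁻¹))))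
        = (∑ a ∈ S, (2:ℝ)^a) * ((∑ b ∈ T, (2:ℝ)^b) * (((2:ℝ)^d')⁻¹ * 2⁻¹)) := by
    intro d' S T
    rw [Finset.sum_mul]
    refine Finset.sum_congr rfl fun a _ => ?_
    rw [Finset.sum_mul, Finset.mul_sum]
  have bound : ∀ (d' : ℕ) (S T : Finset ℕ) (s t : ℕ) (e : ℤ),
      (∀ a ∈ S, a < s) → (∀ b ∈ T, b < t) → ((s : ℤ) + t - d' - 1 ≤ 3 - e) →
      (∑ a ∈ S, ∑ b ∈ T, ((2:ℝ)^a * ((2:ℝ)^b * (((2:ℝ)^d')⁻¹ * 2⁻¹))))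
        ≤ 8 * (2⁻¹ : ℝ) ^ e := by
    intro d' S T s t e hS hT he
    rw [sumeval]
    refine le_trans ?_ (hco_zpow_core s t d' e he)
    have c0 : (0:ℝ) ≤ ((2:ℝ)^d')⁻¹ * 2⁻¹ := by positivity
    have hS1 : ∑ a ∈ S, (2:ℝ)^a ≤ 2 ^ s := hco_pow_sum_le S s hS
    have hT1 : ∑ b ∈ T, (2:ℝ)^b ≤ 2 ^ t := hco_pow_sum_le T t hT
    have hSnn : (0:ℝ) ≤ ∑ a ∈ S, (2:ℝ)^a := Finset.sum_nonneg fun i _ => by positivity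
    have hTnn : (0:ℝ) ≤ ∑ b ∈ T, (2:ℝ)^b := Finset.sum_nonneg fun i _ => by positivity
    refine mul_le_mul hS1 (mul_le_mul_of_nonneg_right hT1 c0) ?_ (by positivity)
    exact mul_nonneg hTnn c0
  constructor
  · -- part 1
    have hb := core d (A.sort (· ≤ ·)) (B.sort (· ≤ ·))
    have hsum : ((A.sort (· ≤ ·)).map fun a => ((B.sort (· ≤ ·)).map fun b =>
          (2:ℝ)^a * ((2:ℝ)^b * (((2:ℝ)^d)⁻¹ * 2⁻¹))).sum).sum
        = ∑ a ∈ A, ∑ b ∈ B, ((2:ℝ)^a * ((2:ℝ)^b * (((2:ℝ)^d)⁻¹ * 2⁻¹))) := by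
      rw [hco_sum_sort]
      exact Finset.sum_congr rfl fun a _ => hco_sum_sort B _
    rw [hsum] at hb
    refine le_trans hb ?_
    refine bound d A B (A.max' hA + 1) (B.max' hB + 1) _ ?_ ?_ ?_
    · intro a ha; exact Nat.lt_succ_of_le (A.le_max' a ha)
    · intro b hb'; exact Nat.lt_succ_of_le (B.le_max' b hb')
    · push_cast; omega
  · -- part 2
    intro d₁ d₂ d₃ _
    rw [hco_avg_eq_prod U d₁, hco_avg_eq_prod V d₂]
    have hb := core d₃ (List.range d₁) (List.range d₂)
    have hrange : ∀ (n : ℕ) (g : ℕ → ℝ), ((List.range n).map g).sum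
        = ∑ a ∈ Finset.range n, g a := by
      intro n g
      rw [← Finset.sort_range n]
      exact hco_sum_sort _ _
    rw [hrange, ] at hb
    have hsum2 : ∀ a : ℕ, ((List.range d₂).map fun b =>
          (2:ℝ)^a * ((2:ℝ)^b * (((2:ℝ)^d₃)⁻¹ * 2⁻¹))).sum
        = ∑ b ∈ Finset.range d₂, ((2:ℝ)^a * ((2:ℝ)^b * (((2:ℝ)^d₃)⁻¹ * 2⁻¹))) :=
      fun a => hrange d₂ _
    simp only [hsum2] at hb
    refine le_trans hb ?_
    refine bound d₃ (Finset.range d₁) (Finset.range d₂) d₁ d₂ _ ?_ ?_ ?_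
    · intro a ha; exact Finset.mem_range.1 ha
    · intro b hb'; exact Finset.mem_range.1 hb'
    · push_cast; omega
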